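/- arXiv:1406.3361 — 7 statements merged into one kernel-verified Lean document; each statement's English description precedes it below -/
import Mathlib

section
/- Let p ≥ 2, let (U,D) ∈ SO(p)×Diag⁺(p), and let X = U D Uᵀ ∈ Sym⁺(p). A pair (U*,D*) ∈ SO(p)×Diag⁺(p) satisfies U* D* U*ᵀ = X if and only if there exist a permutation π of {1,…,p} and a matrix R ∈ G_D such that U* = U R P_πᵀ and D* = D_π. -/
open Matrix

/-- `p × p` real matrices. -/
abbrev Mat (p : ℕ) := Matrix (Fin p) (Fin p) ℝ

/-- `U ∈ SO(p)`: a rotation matrix. -/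
def IsSO {p : ℕ} (U : Mat p) : Prop := U * Uᵀ = 1 ∧ U.det = 1

/-- `D ∈ Diag⁺(p)`: diagonal with positive diagonal entries. -/
def IsDiagPos {p : ℕ} (D : Mat p) : Prop := D.IsDiag ∧ ∀ i, 0 < D i i

/-- Antisymmetric matrix. -/
def IsAntisym {p : ℕ} (A : Mat p) : Prop := Aᵀ = -A

/-- The permutation matrix `P⁰_π`: in column `j`, the entry `π j` equals 1. -/
def P0 {p : ℕ} (π : Equiv.Perm (Fin p)) : Mat p :=
  Matrix.of fun i j => if i = π j then (1 : ℝ) else 0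

/-- `diag(−1,1,…,1)`. -/
def flipMat (p : ℕ) : Mat p :=
  Matrix.diagonal fun i => if (i : ℕ) = 0 then (-1 : ℝ) else 1

open scoped Classical in
/-- `P_π`: the determinant-one modification of `P⁰_π`. -/
noncomputable def Pmat {p : ℕ} (π : Equiv.Perm (Fin p)) : Mat p :=
  if (P0 π).det = 1 then P0 π else flipMat p * P0 π

/-- `D_π := P_π D P_πᵀ`. -/
noncomputable def permDiag {p : ℕ} (π : Equiv.Perm (Fin p)) (D : Mat p) : Mat p :=
  Pmat π * D * (Pmat π)ᵀ

/-- The stabilizer group `G_D = {R ∈ SO(p) : R D Rᵀ = D}`. -/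
def GD {p : ℕ} (D : Mat p) : Set (Mat p) := {R | IsSO R ∧ R * D * Rᵀ = D}

/-- Squared Frobenius norm. -/
noncomputable def frobSq {p : ℕ} (A : Mat p) : ℝ := ∑ i, ∑ j, (A i j) ^ 2

/-- `d_SO(U,V)²`: the minimal value of `‖A‖_F²/2` over antisymmetric `A` with `exp A = V Uᵀ`. -/
noncomputable def dSOsq {p : ℕ} (U V : Mat p) : ℝ :=
  sInf {x | ∃ A : Mat p, IsAntisym A ∧ NormedSpace.exp A = V * Uᵀ ∧ x = frobSq A / 2}

/-- `d_𝒟(D,Λ)²`. -/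
noncomputable def dDsq {p : ℕ} (D Λ : Mat p) : ℝ :=
  ∑ i, (Real.log (Λ i i) - Real.log (D i i)) ^ 2

/-- The geodesic distance on `SO(p) × Diag⁺(p)` (with weight `k`). -/
noncomputable def gdist {p : ℕ} (k : ℝ) (a b : Mat p × Mat p) : ℝ :=
  Real.sqrt (k * dSOsq a.1 b.1 + dDsq a.2 b.2)

/-- `𝓔_X`: the set of versions (eigen-decompositions) of `X`. -/
def Versions {p : ℕ} (X : Mat p) : Set (Mat p × Mat p) :=
  {a | IsSO a.1 ∧ IsDiagPos a.2 ∧ a.1 * a.2 * a.1ᵀ = X}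

/-- The scaling–rotation distance on `Sym⁺(p)`. -/
noncomputable def dSR {p : ℕ} (k : ℝ) (X Y : Mat p) : ℝ :=
  sInf {x | ∃ a ∈ Versions X, ∃ b ∈ Versions Y, x = gdist k a b}

/-! ### Auxiliary lemmas -/

lemma P0_mul {p : ℕ} (π σ : Equiv.Perm (Fin p)) : P0 π * P0 σ = P0 (π * σ) := by
  ext i j
  simp only [P0, Matrix.mul_apply, Matrix.of_apply]
  rw [Finset.sum_eq_single (σ j)] <;> simp +contextual [Equiv.Perm.mul_apply] <;>
    by_cases h : i = π (σ j) <;> simp [h]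

lemma P0_one {p : ℕ} : P0 (1 : Equiv.Perm (Fin p)) = 1 := by
  ext i j; by_cases h : i = j <;> simp [P0, Matrix.one_apply, h]

lemma P0_transpose {p : ℕ} (π : Equiv.Perm (Fin p)) : (P0 π)ᵀ = P0 π⁻¹ := by
  ext i j
  simp only [P0, Matrix.transpose_apply, Matrix.of_apply, Equiv.Perm.inv_def,
    Equiv.eq_symm_apply]
  simp [eq_comm]

lemma P0_mul_transpose {p : ℕ} (π : Equiv.Perm (Fin p)) : P0 π * (P0 π)ᵀ = 1 := by
  rw [P0_transpose, P0_mul, mul_inv_cancel, P0_one]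

lemma P0_eq_permMatrix {p : ℕ} (π : Equiv.Perm (Fin p)) : P0 π = (π⁻¹).permMatrix ℝ := by
  ext i j
  simp only [P0, Matrix.of_apply, Equiv.Perm.permMatrix, PEquiv.toMatrix,
    Equiv.toPEquiv_apply, Option.mem_def, Option.some.injEq, Equiv.Perm.inv_def,
    Equiv.symm_apply_eq]

lemma P0_det {p : ℕ} (π : Equiv.Perm (Fin p)) : (P0 π).det = ((Equiv.Perm.sign π : ℤ) : ℝ) := by
  rw [P0_eq_permMatrix, Matrix.det_permutation]; simp

lemma P0_conj_diagonal {p : ℕ} (π : Equiv.Perm (Fin p)) (d : Fin p → ℝ) :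
    P0 π * Matrix.diagonal d * (P0 π)ᵀ = Matrix.diagonal (fun i => d (π⁻¹ i)) := by
  rw [P0_transpose]
  ext i j
  rw [Matrix.mul_apply]
  simp only [Matrix.mul_diagonal]
  rw [Finset.sum_eq_single (π⁻¹ j)]
  · by_cases h : i = j <;>
      simp [P0, Matrix.diagonal_apply, h, Equiv.Perm.inv_def, Equiv.eq_symm_apply, eq_comm]
  · intro k _ hk
    simp [P0, Equiv.Perm.inv_def, Equiv.symm_apply_eq]
    intro h; exact absurd (by simp [Equiv.Perm.inv_def, ← h]) hk
  · simp

lemma flip_mul_flip {p : ℕ} : flipMat p * flipMat p = 1 := by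
  rw [flipMat, Matrix.diagonal_mul_diagonal,
    show (fun i : Fin p => (if (i : ℕ) = 0 then (-1 : ℝ) else 1) *
        (if (i : ℕ) = 0 then (-1 : ℝ) else 1)) = fun _ => (1 : ℝ) from
      funext fun i => by by_cases h : (i : ℕ) = 0 <;> simp [h],
    Matrix.diagonal_one]

lemma flip_transpose {p : ℕ} : (flipMat p)ᵀ = flipMat p := Matrix.diagonal_transpose _

lemma flip_conj_diagonal {p : ℕ} (d : Fin p → ℝ) :
    flipMat p * Matrix.diagonal d * (flipMat p)ᵀ = Matrix.diagonal d := by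
  rw [flip_transpose, flipMat, Matrix.diagonal_mul_diagonal, Matrix.diagonal_mul_diagonal]
  ext i j
  by_cases hij : i = j
  · subst hij; by_cases h : (i : ℕ) = 0 <;> simp [h]
  · simp [Matrix.diagonal_apply_ne _ hij]

lemma flip_det {p : ℕ} (hp : 0 < p) : (flipMat p).det = -1 := by
  rw [flipMat, Matrix.det_diagonal]
  rw [Finset.prod_eq_single (⟨0, hp⟩ : Fin p)]
  · simp
  · intro k _ hk
    have : (k : ℕ) ≠ 0 := fun h => hk (Fin.ext h)
    simp [this]
  · simp

lemma Pmat_det {p : ℕ} (hp : 0 < p) (π : Equiv.Perm (Fin p)) : (Pmat π).det = 1 := by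
  rw [Pmat]
  split_ifs with h
  · exact h
  · have hd := P0_det π
    rcases Int.units_eq_one_or (Equiv.Perm.sign π) with hs | hs <;> rw [hs] at hd
    · exact absurd (by rw [hd]; norm_num) h
    · rw [Matrix.det_mul, flip_det hp, hd]; norm_num

lemma Pmat_mul_transpose {p : ℕ} (π : Equiv.Perm (Fin p)) : Pmat π * (Pmat π)ᵀ = 1 := by
  rw [Pmat]
  split_ifs with h
  · exact P0_mul_transpose π
  · rw [Matrix.transpose_mul, flip_transpose, Matrix.mul_assoc, ← Matrix.mul_assoc (P0 π),
      P0_mul_transpose, Matrix.one_mul, flip_mul_flip]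

lemma Pmat_conj_diagonal {p : ℕ} (π : Equiv.Perm (Fin p)) (d : Fin p → ℝ) :
    Pmat π * Matrix.diagonal d * (Pmat π)ᵀ = Matrix.diagonal (fun i => d (π⁻¹ i)) := by
  rw [Pmat]
  split_ifs with h
  · exact P0_conj_diagonal π d
  · rw [Matrix.transpose_mul, flip_transpose]
    calc flipMat p * P0 π * Matrix.diagonal d * ((P0 π)ᵀ * flipMat p)
        = flipMat p * (P0 π * Matrix.diagonal d * (P0 π)ᵀ) * (flipMat p)ᵀ := by
          rw [flip_transpose]; noncomm_ring
      _ = _ := by rw [P0_conj_diagonal, flip_conj_diagonal]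

lemma exists_perm_of_multiset_eq {n : ℕ} {d d' : Fin n → ℝ}
    (h : Multiset.map d Finset.univ.val = Multiset.map d' Finset.univ.val) :
    ∃ π : Equiv.Perm (Fin n), ∀ i, d' i = d (π⁻¹ i) := by
  have hperm : List.Perm (List.ofFn d) (List.ofFn d') := by
    rw [← Multiset.coe_eq_coe]
    simpa [Fin.univ_val_map] using h
  set s := Tuple.sort d with hs
  set s' := Tuple.sort d' with hs'
  have h1 : List.ofFn (d ∘ s) = List.ofFn (d' ∘ s') := by
    refine List.Perm.eq_of_sortedLE (List.sortedLE_ofFn_iff.mpr (Tuple.monotone_sort d))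
      (List.sortedLE_ofFn_iff.mpr (Tuple.monotone_sort d')) ?_
    exact ((s.ofFn_comp_perm d).trans hperm).trans (s'.ofFn_comp_perm d').symm
  have h2 : d ∘ s = d' ∘ s' := List.ofFn_inj.mp h1
  refine ⟨s.symm.trans s', fun i => ?_⟩
  have := congrFun h2 (s'.symm i)
  simp only [Function.comp_apply] at this
  rw [Equiv.apply_symm_apply] at this
  rw [← this]
  simp [Equiv.Perm.inv_def]

lemma diagonal_sub_const {n : ℕ} (t : ℝ) (d : Fin n → ℝ) :
    Matrix.diagonal (fun i => t - d i) = t • (1 : Mat n) - Matrix.diagonal d := by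
  ext i j
  by_cases hij : i = j
  · subst hij; simp
  · simp [Matrix.diagonal_apply_ne _ hij, Matrix.one_apply_ne hij]

lemma multiset_eq_of_conj {n : ℕ} {d d' : Fin n → ℝ} {M : Mat n} (hM : M * Mᵀ = 1)
    (hconj : M * Matrix.diagonal d' * Mᵀ = Matrix.diagonal d) :
    Multiset.map d Finset.univ.val = Multiset.map d' Finset.univ.val := by
  have hdet2 : M.det * M.det = 1 := by
    have := congrArg Matrix.det hM
    rwa [Matrix.det_mul, Matrix.det_transpose, Matrix.det_one] at this
  have key : ∀ t : ℝ, (∏ i, (t - d i)) = ∏ i, (t - d' i) := by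
    intro t
    have h1 : M * Matrix.diagonal (fun i => t - d' i) * Mᵀ
        = Matrix.diagonal (fun i => t - d i) := by
      rw [diagonal_sub_const, diagonal_sub_const, Matrix.mul_sub, Matrix.sub_mul,
        Matrix.mul_smul, Matrix.smul_mul, Matrix.mul_one, hM, hconj]
    have h2 := congrArg Matrix.det h1
    rw [Matrix.det_mul, Matrix.det_mul, Matrix.det_transpose, Matrix.det_diagonal,
      Matrix.det_diagonal] at h2
    rw [show M.det * (∏ i, (t - d' i)) * M.det
        = (∏ i, (t - d' i)) * (M.det * M.det) from by ring, hdet2, mul_one] at h2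
    exact h2.symm
  have hq : ((Multiset.map d Finset.univ.val).map
        (fun a => Polynomial.X - Polynomial.C a)).prod
      = ((Multiset.map d' Finset.univ.val).map
        (fun a => Polynomial.X - Polynomial.C a)).prod := by
    apply Polynomial.funext
    intro t
    rw [Polynomial.eval_multiset_prod, Polynomial.eval_multiset_prod]
    simp only [Multiset.map_map, Function.comp_def, Polynomial.eval_sub, Polynomial.eval_X,
      Polynomial.eval_C, ← Finset.prod_eq_multiset_prod]
    exact key t
  have := congrArg Polynomial.roots hq
  rwa [Polynomial.roots_multiset_prod_X_sub_C, Polynomial.roots_multiset_prod_X_sub_C] at this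

/-- characterization of all versions of `X = U D Uᵀ`. -/
theorem versions_characterization {p : ℕ} (hp : 2 ≤ p)
    (U D : Mat p) (hU : IsSO U) (hD : IsDiagPos D)
    (Ustar Dstar : Mat p) (hUs : IsSO Ustar) (hDs : IsDiagPos Dstar) :
    Ustar * Dstar * Ustarᵀ = U * D * Uᵀ ↔
      ∃ (π : Equiv.Perm (Fin p)) (R : Mat p), R ∈ GD D ∧
        Ustar = U * R * (Pmat π)ᵀ ∧ Dstar = permDiag π D := by
  obtain ⟨hUo, hUdet⟩ := hU
  obtain ⟨hUso, hUsdet⟩ := hUs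
  have hUo' : Uᵀ * U = 1 := mul_eq_one_comm.mp hUo
  have hUso' : Ustarᵀ * Ustar = 1 := mul_eq_one_comm.mp hUso
  have hDdiag : Matrix.diagonal D.diag = D := hD.1.diagonal_diag
  have hDsdiag : Matrix.diagonal Dstar.diag = Dstar := hDs.1.diagonal_diag
  constructor
  · intro hX
    set M := Uᵀ * Ustar with hM
    have hMt : Mᵀ = Ustarᵀ * U := by rw [hM, Matrix.transpose_mul, Matrix.transpose_transpose]
    have hMMt : M * Mᵀ = 1 := by
      rw [hM, hMt, Matrix.mul_assoc, ← Matrix.mul_assoc Ustar, hUso, Matrix.one_mul, hUo']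
    have hconj : M * Dstar * Mᵀ = D := by
      rw [hM, hMt]
      calc Uᵀ * Ustar * Dstar * (Ustarᵀ * U)
          = Uᵀ * (Ustar * Dstar * Ustarᵀ) * U := by noncomm_ring
        _ = Uᵀ * (U * D * Uᵀ) * U := by rw [hX]
        _ = (Uᵀ * U) * D * (Uᵀ * U) := by noncomm_ring
        _ = D := by rw [hUo', Matrix.one_mul, Matrix.mul_one]
    have hmul : Multiset.map D.diag Finset.univ.val = Multiset.map Dstar.diag Finset.univ.val :=
      multiset_eq_of_conj hMMt (by rw [hDsdiag, hDdiag]; exact hconj)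
    obtain ⟨π, hπ⟩ := exists_perm_of_multiset_eq hmul
    have hDst : permDiag π D = Dstar := by
      have hfun : (fun i => D.diag (π⁻¹ i)) = Dstar.diag := funext fun i => (hπ i).symm
      rw [permDiag, ← hDdiag, Pmat_conj_diagonal, hfun, hDsdiag]
    have hPPt : Pmat π * (Pmat π)ᵀ = 1 := Pmat_mul_transpose π
    refine ⟨π, M * Pmat π, ⟨⟨?_, ?_⟩, ?_⟩, ?_, hDst.symm⟩
    · rw [Matrix.transpose_mul, Matrix.mul_assoc, ← Matrix.mul_assoc (Pmat π), hPPt,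
        Matrix.one_mul, hMMt]
    · rw [Matrix.det_mul, Pmat_det (by omega) π, mul_one, hM, Matrix.det_mul,
        Matrix.det_transpose, hUdet, hUsdet, mul_one]
    · calc M * Pmat π * D * (M * Pmat π)ᵀ
          = M * (Pmat π * D * (Pmat π)ᵀ) * Mᵀ := by
            rw [Matrix.transpose_mul]; noncomm_ring
        _ = M * Dstar * Mᵀ := by rw [show Pmat π * D * (Pmat π)ᵀ = Dstar from hDst]
        _ = D := hconj
    · calc Ustar = (U * Uᵀ) * Ustar := by rw [hUo, Matrix.one_mul]
        _ = U * M * (Pmat π * (Pmat π)ᵀ) := by rw [hPPt, hM]; noncomm_ring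
        _ = U * (M * Pmat π) * (Pmat π)ᵀ := by noncomm_ring
  · rintro ⟨π, R, ⟨⟨hRo, _⟩, hRD⟩, hUst, hDst⟩
    have hPt : (Pmat π)ᵀ * Pmat π = 1 := mul_eq_one_comm.mp (Pmat_mul_transpose π)
    rw [hUst, hDst, permDiag]
    calc U * R * (Pmat π)ᵀ * (Pmat π * D * (Pmat π)ᵀ) * (U * R * (Pmat π)ᵀ)ᵀ
        = U * R * ((Pmat π)ᵀ * Pmat π) * D * ((Pmat π)ᵀ * Pmat π) * Rᵀ * Uᵀ := by
          simp only [Matrix.transpose_mul, Matrix.transpose_transpose]; noncomm_ring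
      _ = U * (R * D * Rᵀ) * Uᵀ := by rw [hPt, Matrix.mul_one, Matrix.mul_one]; noncomm_ring
      _ = U * D * Uᵀ := by rw [hRD]
end

section
/- Let p ≥ 2 and let X ∈ Sym⁺(p) have p pairwise distinct eigenvalues. Then the set 𝓔_X of eigen-decompositions of X has exactly p!·2^{p−1} elements. -/
open Matrix

namespace CardAux

variable {p : ℕ}

/-- the parameterization map -/
noncomputable def Fmap (U₀ : Mat p) (ev : Fin p → ℝ)
    (x : Equiv.Perm (Fin p) × (Fin p → ℤˣ)) : Mat p × Mat p :=
  (Matrix.of fun i j => ((x.2 j : ℤ) : ℝ) * U₀ i (x.1 j),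
   Matrix.diagonal fun j => ev (x.1 j))

lemma units_sq (u : ℤˣ) : ((u : ℤ) : ℝ) * ((u : ℤ) : ℝ) = 1 := by
  rcases Int.units_eq_one_or u with h | h <;> simp [h]

lemma counting (n : ℕ) :
    Nat.card {x : Equiv.Perm (Fin (n+1)) × (Fin (n+1) → ℤˣ) //
      (∏ j, x.2 j) = Equiv.Perm.sign x.1} = (n+1).factorial * 2 ^ n := by
  have e : {x : Equiv.Perm (Fin (n+1)) × (Fin (n+1) → ℤˣ) //
      (∏ j, x.2 j) = Equiv.Perm.sign x.1} ≃
      Equiv.Perm (Fin (n+1)) × (Fin n → ℤˣ) := by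
    refine
      { toFun := fun x => (x.1.1, fun i => x.1.2 i.succ)
        invFun := fun y =>
          ⟨(y.1, Fin.cons (Equiv.Perm.sign y.1 * (∏ i, y.2 i)⁻¹) y.2), ?_⟩
        left_inv := ?_
        right_inv := ?_ }
    · rw [Fin.prod_univ_succ]
      simp [mul_assoc]
    · rintro ⟨⟨σ, s⟩, h⟩
      rw [Fin.prod_univ_succ] at h
      have h0 : s 0 = Equiv.Perm.sign σ * (∏ i, s (Fin.succ i))⁻¹ :=
        eq_mul_inv_iff_mul_eq.mpr h
      refine Subtype.ext (Prod.ext rfl ?_)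
      simp only
      funext x
      refine Fin.cases ?_ (fun i => ?_) x
      · rw [Fin.cons_zero, h0]
      · rw [Fin.cons_succ]
    · rintro ⟨σ, t⟩
      simp [Fin.tail]
  rw [Nat.card_congr e]
  simp [Nat.card_eq_fintype_card, Fintype.card_units_int, Fintype.card_perm]


lemma mem_versions {X U₀ : Mat p} {ev : Fin p → ℝ}
    (hpos : ∀ i, 0 < ev i) (hU₀ : U₀ * U₀ᵀ = 1) (hdet : U₀.det = 1)
    (hX : X = U₀ * Matrix.diagonal ev * U₀ᵀ)
    (x : Equiv.Perm (Fin p) × (Fin p → ℤˣ))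
    (hx : (∏ j, x.2 j) = Equiv.Perm.sign x.1) :
    Fmap U₀ ev x ∈ Versions X := by
  obtain ⟨σ, s⟩ := x
  set U : Mat p := Matrix.of fun i j => ((s j : ℤ) : ℝ) * U₀ i (σ j) with hU
  have hF : Fmap U₀ ev (σ, s) = (U, Matrix.diagonal fun j => ev (σ j)) := rfl
  rw [hF]
  refine ⟨⟨?_, ?_⟩, ⟨Matrix.isDiag_diagonal _, fun i => by
    simpa using hpos (σ i)⟩, ?_⟩
  · ext i k
    rw [Matrix.mul_apply]
    have h1 : ∀ j, U i j * Uᵀ j k = U₀ i (σ j) * U₀ k (σ j) := by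
      intro j
      simp only [hU, Matrix.transpose_apply, Matrix.of_apply]
      calc ((s j : ℤ) : ℝ) * U₀ i (σ j) * (((s j : ℤ) : ℝ) * U₀ k (σ j))
          = (((s j : ℤ) : ℝ) * ((s j : ℤ) : ℝ)) * (U₀ i (σ j) * U₀ k (σ j)) := by ring
        _ = U₀ i (σ j) * U₀ k (σ j) := by rw [units_sq, one_mul]
    rw [Finset.sum_congr rfl fun j _ => h1 j]
    have := congrFun (congrFun hU₀ i) k
    rw [Matrix.mul_apply] at this
    rw [Fintype.sum_equiv σ _ (fun m => U₀ i m * U₀ k m) (fun j => rfl)]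
    simpa using this
  · have hUeq : U = U₀.submatrix id σ * Matrix.diagonal (fun j => ((s j : ℤ) : ℝ)) := by
      ext i j
      rw [Matrix.mul_diagonal]
      simp [hU, mul_comm]
    rw [hUeq, Matrix.det_mul, Matrix.det_permute', Matrix.det_diagonal, hdet, mul_one]
    have hcast : (∏ j, ((s j : ℤ) : ℝ)) = (((∏ j, s j : ℤˣ) : ℤ) : ℝ) := by
      push_cast
      rfl
    rw [hcast, hx]
    rcases Int.units_eq_one_or (Equiv.Perm.sign σ) with h | h <;> simp [h]
  · rw [hX]
    ext i k
    rw [Matrix.mul_assoc, Matrix.mul_assoc, Matrix.mul_apply, Matrix.mul_apply]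
    have h2 : ∀ j, U i j * (Matrix.diagonal (fun j => ev (σ j)) * Uᵀ) j k
        = U₀ i (σ j) * ((Matrix.diagonal ev * U₀ᵀ) (σ j) k) := by
      intro j
      rw [Matrix.diagonal_mul, Matrix.diagonal_mul]
      simp only [hU, Matrix.transpose_apply, Matrix.of_apply]
      calc ((s j : ℤ) : ℝ) * U₀ i (σ j) * (ev (σ j) * (((s j : ℤ) : ℝ) * U₀ k (σ j)))
          = (((s j : ℤ) : ℝ) * ((s j : ℤ) : ℝ)) * (U₀ i (σ j) * (ev (σ j) * U₀ k (σ j))) := by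
            ring
        _ = U₀ i (σ j) * (ev (σ j) * U₀ k (σ j)) := by rw [units_sq, one_mul]
    rw [Finset.sum_congr rfl fun j _ => h2 j]
    exact Fintype.sum_equiv σ (fun j => U₀ i (σ j) * ((Matrix.diagonal ev * U₀ᵀ) (σ j) k))
      (fun m => U₀ i m * ((Matrix.diagonal ev * U₀ᵀ) m k)) (fun j => rfl)

lemma Fmap_injective {U₀ : Mat p} {ev : Fin p → ℝ} (hinj : Function.Injective ev)
    (hU₀ : U₀ᵀ * U₀ = 1) : Function.Injective (Fmap U₀ ev) := by
  rintro ⟨σ, s⟩ ⟨τ, t⟩ h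
  have h1 := congrArg Prod.fst h
  have h2 := congrArg Prod.snd h
  simp only [Fmap] at h1 h2
  have hσ : σ = τ := by
    apply Equiv.ext; intro j
    apply hinj
    have := congrFun (congrFun h2 j) j
    simpa [Matrix.diagonal_apply_eq] using this
  subst hσ
  have hst : s = t := by
    funext j
    have hcol : ∃ i, U₀ i (σ j) ≠ 0 := by
      by_contra hc
      push_neg at hc
      have := congrFun (congrFun hU₀ (σ j)) (σ j)
      rw [Matrix.mul_apply] at this
      simp only [Matrix.transpose_apply] at this
      rw [Finset.sum_eq_zero (fun i _ => by rw [hc i, zero_mul])] at this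
      simp [Matrix.one_apply] at this
    obtain ⟨i, hi⟩ := hcol
    have := congrFun (congrFun h1 i) j
    simp only [Matrix.of_apply] at this
    have hval : ((s j : ℤ) : ℝ) = ((t j : ℤ) : ℝ) := mul_right_cancel₀ hi this
    exact Units.ext (by exact_mod_cast hval)
  rw [hst]

lemma versions_subset {X U₀ : Mat p} {ev : Fin p → ℝ} (hinj : Function.Injective ev)
    (hU₀ : U₀ * U₀ᵀ = 1) (hdet : U₀.det = 1) (hX : X = U₀ * Matrix.diagonal ev * U₀ᵀ)
    {U D : Mat p} (h : (U, D) ∈ Versions X) :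
    ∃ x : Equiv.Perm (Fin p) × (Fin p → ℤˣ),
      (∏ j, x.2 j) = Equiv.Perm.sign x.1 ∧ Fmap U₀ ev x = (U, D) := by
  obtain ⟨⟨hUU, hUdet⟩, ⟨hDdiag, hDpos⟩, hX'⟩ := h
  dsimp only at hUU hUdet hX' hDdiag hDpos
  have hU₀' : U₀ᵀ * U₀ = 1 := mul_eq_one_comm.mp hU₀
  have hUU' : Uᵀ * U = 1 := mul_eq_one_comm.mp hUU
  have hD : D = Matrix.diagonal (fun j => D j j) := by
    ext i j
    by_cases hij : i = j
    · subst hij; simp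
    · rw [Matrix.diagonal_apply_ne _ hij, hDdiag hij]
  set W := U₀ᵀ * U with hWdef
  have hcomm : Matrix.diagonal ev * W = W * D := by
    have e1 : X * U = U * D := by
      calc X * U = U * D * (Uᵀ * U) := by rw [← hX', Matrix.mul_assoc]
        _ = U * D := by rw [hUU', Matrix.mul_one]
    have e2 : U₀ᵀ * X = Matrix.diagonal ev * U₀ᵀ := by
      rw [hX]
      simp only [← Matrix.mul_assoc]
      rw [hU₀', Matrix.one_mul]
    calc Matrix.diagonal ev * W = (Matrix.diagonal ev * U₀ᵀ) * U := by
          rw [hWdef, Matrix.mul_assoc]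
      _ = U₀ᵀ * (X * U) := by rw [← e2, Matrix.mul_assoc]
      _ = U₀ᵀ * (U * D) := by rw [e1]
      _ = W * D := by rw [hWdef, Matrix.mul_assoc]
  have hent : ∀ i j, W i j ≠ 0 → ev i = D j j := by
    intro i j hne
    have hij := congrFun (congrFun hcomm i) j
    rw [Matrix.diagonal_mul] at hij
    rw [hD, Matrix.mul_diagonal] at hij
    rw [mul_comm (ev i)] at hij
    exact mul_left_cancel₀ hne hij
  have hWo : Wᵀ * W = 1 := by
    rw [hWdef, Matrix.transpose_mul, Matrix.transpose_transpose]
    calc Uᵀ * U₀ * (U₀ᵀ * U) = Uᵀ * ((U₀ * U₀ᵀ) * U) := by simp only [Matrix.mul_assoc]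
      _ = 1 := by rw [hU₀, Matrix.one_mul, hUU']
  have hWsum : ∀ j j', ∑ i, W i j * W i j' = (1 : Mat p) j j' := by
    intro j j'
    have := congrFun (congrFun hWo j) j'
    rw [Matrix.mul_apply] at this
    simpa [Matrix.transpose_apply] using this
  have hexists : ∀ j, ∃ i, W i j ≠ 0 := by
    intro j
    by_contra hc
    push_neg at hc
    have := hWsum j j
    rw [Finset.sum_eq_zero (fun i _ => by rw [hc i, zero_mul])] at this
    simp [Matrix.one_apply] at this
  choose τ hτ using hexists
  have huniq : ∀ j i, W i j ≠ 0 → i = τ j := fun j i hi =>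
    hinj (by rw [hent i j hi, hent (τ j) j (hτ j)])
  have hWoff : ∀ j i, i ≠ τ j → W i j = 0 := fun j i hne =>
    by_contra fun hc => hne (huniq j i hc)
  have hww : ∀ j, W (τ j) j * W (τ j) j = 1 := by
    intro j
    have := hWsum j j
    rwa [Finset.sum_eq_single (τ j) (fun i _ hne => by rw [hWoff j i hne, zero_mul])
      (fun hmem => absurd (Finset.mem_univ _) hmem), Matrix.one_apply_eq] at this
  have hτinj : Function.Injective τ := by
    intro j j' hjj
    by_contra hne
    have h0 := hWsum j j'
    rw [Matrix.one_apply_ne hne] at h0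
    rw [Finset.sum_eq_single (τ j) (fun i _ hi => by rw [hWoff j i hi, zero_mul])
      (fun hmem => absurd (Finset.mem_univ _) hmem)] at h0
    exact mul_ne_zero (hτ j) (by rw [hjj]; exact hτ j') h0
  let σ : Equiv.Perm (Fin p) := Equiv.ofBijective τ (Finite.injective_iff_bijective.mp hτinj)
  have hσ : ∀ j, σ j = τ j := fun j => rfl
  set w : Fin p → ℝ := fun j => W (τ j) j with hwdef
  have hsign : ∀ j, w j = 1 ∨ w j = -1 := fun j => mul_self_eq_one_iff.mp (hww j)
  set s : Fin p → ℤˣ := fun j => if w j = 1 then 1 else -1 with hs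
  have hsw : ∀ j, ((s j : ℤ) : ℝ) = w j := by
    intro j
    rcases hsign j with hcase | hcase
    · simp [hs, hcase]
    · have hne : w j ≠ 1 := by rw [hcase]; norm_num
      simp [hs, hcase, if_neg hne]
  have hUW : U = U₀ * W := by
    rw [hWdef, ← Matrix.mul_assoc, hU₀, Matrix.one_mul]
  have hUentry : ∀ i j, U i j = w j * U₀ i (τ j) := by
    intro i j
    rw [hUW, Matrix.mul_apply]
    rw [Finset.sum_eq_single (τ j) (fun k _ hk => by rw [hWoff j k hk, mul_zero])
      (fun hmem => absurd (Finset.mem_univ _) hmem)]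
    ring
  have hDentry : ∀ j, D j j = ev (τ j) := fun j => (hent (τ j) j (hτ j)).symm
  have hWmat : W = (Matrix.diagonal w).submatrix σ.symm id := by
    ext i j
    rw [Matrix.submatrix_apply, id]
    by_cases hij : i = τ j
    · subst hij
      have hsymm : σ.symm (τ j) = j := σ.symm_apply_eq.mpr (hσ j).symm
      rw [hsymm, Matrix.diagonal_apply_eq]
    · have hsymm : σ.symm i ≠ j := by
        intro hcc
        exact hij (by rw [← σ.apply_symm_apply i, hcc, hσ])
      rw [hWoff j i hij, Matrix.diagonal_apply_ne _ hsymm]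
  have hdetW : W.det = ((Equiv.Perm.sign σ : ℤ) : ℝ) * ∏ j, w j := by
    rw [hWmat, Matrix.det_permute, Matrix.det_diagonal, Equiv.Perm.sign_symm]
  have hdetW1 : W.det = 1 := by
    have : U.det = U₀.det * W.det := by rw [hUW, Matrix.det_mul]
    rw [hUdet, hdet, one_mul] at this
    exact this.symm
  have hkey : ((Equiv.Perm.sign σ : ℤ) : ℝ) * (((∏ j, s j : ℤˣ) : ℤ) : ℝ) = 1 := by
    have hprod : (((∏ j, s j : ℤˣ) : ℤ) : ℝ) = ∏ j, w j := by
      push_cast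
      exact Finset.prod_congr rfl fun j _ => hsw j
    rw [hprod, ← hdetW, hdetW1]
  have hcond : (∏ j, s j) = Equiv.Perm.sign σ := by
    rcases Int.units_eq_one_or (∏ j, s j) with hc | hc <;>
      rcases Int.units_eq_one_or (Equiv.Perm.sign σ) with hc' | hc' <;>
      rw [hc, hc'] at hkey ⊢ <;> norm_num at hkey
  refine ⟨(σ, s), hcond, Prod.ext ?_ ?_⟩
  · ext i j
    simp only [Fmap, Matrix.of_apply]
    rw [hUentry, hsw, hσ]
  · simp only [Fmap]
    rw [hD]
    exact congrArg Matrix.diagonal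
      (funext fun j => by rw [hσ j]; exact (hDentry j).symm)

lemma key (hp : 2 ≤ p) (X V : Mat p) (ev : Fin p → ℝ) (hpos : ∀ i, 0 < ev i)
    (hinj : Function.Injective ev) (hV : V * Vᵀ = 1)
    (hXV : X = V * Matrix.diagonal ev * Vᵀ) :
    (Versions X).ncard = p.factorial * 2 ^ (p - 1) := by
  have hdetV : V.det * V.det = 1 := by
    have := congrArg Matrix.det hV
    rwa [Matrix.det_mul, Matrix.det_transpose, Matrix.det_one] at this
  have hex : ∃ U₀ : Mat p, U₀ * U₀ᵀ = 1 ∧ U₀.det = 1 ∧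
      X = U₀ * Matrix.diagonal ev * U₀ᵀ := by
    rcases mul_self_eq_one_iff.mp hdetV with h1 | h1
    · exact ⟨V, hV, h1, hXV⟩
    · haveI : NeZero p := ⟨by omega⟩
      set J : Mat p := Matrix.diagonal (fun i => if i = 0 then (-1:ℝ) else 1) with hJ
      have hone : (fun i : Fin p => (if i = 0 then (-1:ℝ) else 1) * (if i = 0 then (-1:ℝ) else 1))
          = fun _ => (1:ℝ) := funext fun i => by by_cases h : i = 0 <;> simp [h]
      have hJJ : J * J = 1 := by
        rw [hJ, Matrix.diagonal_mul_diagonal, hone, Matrix.diagonal_one]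
      have hJT : Jᵀ = J := Matrix.diagonal_transpose _
      have hdetJ : J.det = -1 := by
        rw [hJ, Matrix.det_diagonal]
        simp
      refine ⟨V * J, ?_, ?_, ?_⟩
      · rw [Matrix.transpose_mul, hJT]
        calc V * J * (J * Vᵀ) = V * ((J * J) * Vᵀ) := by simp only [Matrix.mul_assoc]
          _ = 1 := by rw [hJJ, Matrix.one_mul, hV]
      · rw [Matrix.det_mul, h1, hdetJ]; norm_num
      · have hJD : J * Matrix.diagonal ev * J = Matrix.diagonal ev := by
          rw [hJ, Matrix.diagonal_mul_diagonal, Matrix.diagonal_mul_diagonal]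
          refine congrArg Matrix.diagonal (funext fun i => ?_)
          by_cases h : i = 0 <;> simp [h]
        calc X = V * Matrix.diagonal ev * Vᵀ := hXV
          _ = V * (J * Matrix.diagonal ev * J) * Vᵀ := by rw [hJD]
          _ = V * J * Matrix.diagonal ev * (V * J)ᵀ := by
              rw [Matrix.transpose_mul, hJT]
              simp only [Matrix.mul_assoc]
  obtain ⟨U₀, hU₀, hdet, hX⟩ := hex
  have him : Versions X = Fmap U₀ ev '' {x | (∏ j, x.2 j) = Equiv.Perm.sign x.1} := by
    ext ⟨U, D⟩
    constructor
    · intro h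
      obtain ⟨x, hx1, hx2⟩ := versions_subset hinj hU₀ hdet hX h
      exact ⟨x, hx1, hx2⟩
    · rintro ⟨x, hx1, heq⟩
      exact heq ▸ mem_versions hpos hU₀ hdet hX x hx1
  rw [him, Set.ncard_image_of_injective _ (Fmap_injective hinj (mul_eq_one_comm.mp hU₀))]
  have hcard : {x : Equiv.Perm (Fin p) × (Fin p → ℤˣ) |
      (∏ j, x.2 j) = Equiv.Perm.sign x.1}.ncard
      = Nat.card {x : Equiv.Perm (Fin p) × (Fin p → ℤˣ) //
      (∏ j, x.2 j) = Equiv.Perm.sign x.1} := (Nat.card_coe_set_eq _).symm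
  rw [hcard]
  obtain ⟨n, rfl⟩ : ∃ n, p = n + 1 := ⟨p - 1, by omega⟩
  simpa using counting n


end CardAux

/-- an SPD matrix with pairwise distinct eigenvalues has exactly
`p! · 2^(p−1)` eigen-decompositions. -/
theorem card_versions_of_distinct_eigenvalues {p : ℕ} (hp : 2 ≤ p)
    (X : Mat p) (hX : X.PosDef) (hdist : Function.Injective hX.1.eigenvalues) :
    (Versions X).ncard = Nat.factorial p * 2 ^ (p - 1) := by
  classical
  have hspec := hX.1.spectral_theorem
  set V : Mat p := (hX.1.eigenvectorUnitary : Mat p) with hVdef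
  have hmem := (hX.1.eigenvectorUnitary).2
  rw [Matrix.mem_unitaryGroup_iff] at hmem
  have hstar : star V = Vᵀ := by
    rw [Matrix.star_eq_conjTranspose, Matrix.conjTranspose_eq_transpose_of_trivial]
  have hVV : V * Vᵀ = 1 := by rw [← hstar]; exact hmem
  have hXd : X = V * Matrix.diagonal hX.1.eigenvalues * Vᵀ := by
    rw [← hstar]
    rw [Unitary.conjStarAlgAut_apply] at hspec
    exact hspec
  exact CardAux.key hp X V _ (fun i => hX.eigenvalues_pos i) hdist hVV hXd
end

section
/- Let p ≥ 2 and fix k > 0. For any R₁, R₂ ∈ O(p) with det(R₁)·det(R₂) = 1, any permutation π of {1,…,p}, any S ∈ Diag⁺(p), and any (U,D), (V,Λ) ∈ SO(p)×Diag⁺(p), one has d((R₁ U R₂, S·D_π), (R₁ V R₂, S·Λ_π)) = d((U,D), (V,Λ)). -/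
open Matrix

section Aux

open Matrix

lemma P0_diag_conj {p : ℕ} (π : Equiv.Perm (Fin p)) (d : Fin p → ℝ) :
    P0 π * Matrix.diagonal d * (P0 π)ᵀ = Matrix.diagonal (fun i => d (π.symm i)) := by
  ext i j
  simp only [P0, Matrix.mul_apply, Matrix.diagonal_apply, Matrix.transpose_apply, Matrix.of_apply,
    ite_mul, mul_ite, one_mul, mul_one, zero_mul, mul_zero, Finset.sum_ite_eq,
    Finset.sum_ite_eq', Finset.mem_univ, if_true]
  rw [Finset.sum_eq_single (π.symm j)]
  · simp only [Equiv.apply_symm_apply]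
    split_ifs with h h' h' <;> simp_all
  · intro b _ hb
    rw [if_neg]
    intro h; exact hb (by simp [h])
  · simp

lemma permDiag_diagonal {p : ℕ} (π : Equiv.Perm (Fin p)) (d : Fin p → ℝ) :
    permDiag π (Matrix.diagonal d) = Matrix.diagonal (fun i => d (π.symm i)) := by
  classical
  unfold permDiag Pmat
  split
  · exact P0_diag_conj π d
  · have hflip : flipMat p = Matrix.diagonal (fun i : Fin p => if (i : ℕ) = 0 then (-1:ℝ) else 1) := rfl
    rw [Matrix.transpose_mul, show (flipMat p)ᵀ = flipMat p by
      rw [hflip, Matrix.diagonal_transpose]]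
    calc flipMat p * P0 π * Matrix.diagonal d * ((P0 π)ᵀ * flipMat p)
        = flipMat p * (P0 π * Matrix.diagonal d * (P0 π)ᵀ) * flipMat p := by
          noncomm_ring
      _ = Matrix.diagonal (fun i => d (π.symm i)) := by
          rw [P0_diag_conj, hflip, Matrix.diagonal_mul_diagonal, Matrix.diagonal_mul_diagonal]
          rw [Matrix.diagonal_eq_diagonal_iff]
          intro i
          by_cases h : (i : ℕ) = 0 <;> simp [h]

lemma frobSq_eq_trace {p : ℕ} (A : Mat p) : frobSq A = (A * Aᵀ).trace := by
  simp [frobSq, Matrix.trace, Matrix.mul_apply, Matrix.diag, sq]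

lemma frobSq_conj {p : ℕ} (Q A : Mat p) (hQ : Q * Qᵀ = 1) :
    frobSq (Qᵀ * A * Q) = frobSq A := by
  have hQ' : Qᵀ * Q = 1 := mul_eq_one_comm.mp hQ
  rw [frobSq_eq_trace, frobSq_eq_trace]
  have : Qᵀ * A * Q * (Qᵀ * A * Q)ᵀ = Qᵀ * (A * Aᵀ) * Q := by
    have e1 : Qᵀ * A * Q * (Qᵀ * A * Q)ᵀ = Qᵀ * A * (Q * Qᵀ) * Aᵀ * Q := by
      simp only [Matrix.transpose_mul, Matrix.transpose_transpose]
      noncomm_ring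
    rw [e1, hQ]
    noncomm_ring
  rw [this, Matrix.trace_mul_cycle, ← Matrix.mul_assoc, hQ, Matrix.one_mul]

lemma dSOsq_conj {p : ℕ} (Q U V : Mat p) (hQ : Q * Qᵀ = 1) :
    dSOsq (Q * U) (Q * V) = dSOsq U V := by
  have hQ' : Qᵀ * Q = 1 := mul_eq_one_comm.mp hQ
  have hVU : (Q * V) * (Q * U)ᵀ = Q * (V * Uᵀ) * Qᵀ := by
    simp only [Matrix.transpose_mul]
    noncomm_ring
  unfold dSOsq
  congr 1
  set Qu : (Mat p)ˣ := ⟨Q, Qᵀ, hQ, hQ'⟩ with hQu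
  ext x
  constructor
  · rintro ⟨A, hA, hexp, hx⟩
    refine ⟨Qᵀ * A * Q, ?_, ?_, ?_⟩
    · unfold IsAntisym at hA ⊢
      simp only [Matrix.transpose_mul, Matrix.transpose_transpose, hA]
      noncomm_ring
    · have := Matrix.exp_units_conj' Qu A
      simp only [hQu, Units.inv_mk] at this
      rw [this, hexp, hVU]
      calc Qᵀ * (Q * (V * Uᵀ) * Qᵀ) * Q
          = (Qᵀ * Q) * (V * Uᵀ) * (Qᵀ * Q) := by noncomm_ring
        _ = V * Uᵀ := by rw [hQ']; noncomm_ring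
    · rw [hx, frobSq_conj Q A hQ]
  · rintro ⟨A, hA, hexp, hx⟩
    refine ⟨Q * A * Qᵀ, ?_, ?_, ?_⟩
    · unfold IsAntisym at hA ⊢
      simp only [Matrix.transpose_mul, Matrix.transpose_transpose, hA]
      noncomm_ring
    · have := Matrix.exp_units_conj Qu A
      simp only [hQu, Units.inv_mk] at this
      rw [this, hexp, hVU]
    · rw [hx]
      congr 1
      rw [show Q * A * Qᵀ = Qᵀᵀ * A * Qᵀ by rw [Matrix.transpose_transpose]]
      rw [frobSq_conj Qᵀ A (by rw [Matrix.transpose_transpose]; exact hQ')]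

lemma dSOsq_right {p : ℕ} (R U V : Mat p) (hR : R * Rᵀ = 1) :
    dSOsq (U * R) (V * R) = dSOsq U V := by
  unfold dSOsq
  have : (V * R) * (U * R)ᵀ = V * Uᵀ := by
    rw [Matrix.transpose_mul]
    calc V * R * (Rᵀ * Uᵀ) = V * (R * Rᵀ) * Uᵀ := by noncomm_ring
      _ = V * Uᵀ := by rw [hR]; noncomm_ring
  rw [this]

end Aux

/-- invariance of the geodesic distance under simultaneous left/right
multiplication by orthogonal matrices, permutation and scaling. -/
theorem gdist_invariance {p : ℕ} (hp : 2 ≤ p) (k : ℝ) (hk : 0 < k)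
    (R₁ R₂ : Mat p) (hR₁ : R₁ * R₁ᵀ = 1) (hR₂ : R₂ * R₂ᵀ = 1)
    (hdet : R₁.det * R₂.det = 1)
    (π : Equiv.Perm (Fin p)) (S : Mat p) (hS : IsDiagPos S)
    (U D V Λ : Mat p) (hU : IsSO U) (hD : IsDiagPos D) (hV : IsSO V) (hΛ : IsDiagPos Λ) :
    gdist k (R₁ * U * R₂, S * permDiag π D) (R₁ * V * R₂, S * permDiag π Λ)
      = gdist k (U, D) (V, Λ) := by
  
  have h1 : dSOsq (R₁ * U * R₂) (R₁ * V * R₂) = dSOsq U V := by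
    rw [Matrix.mul_assoc R₁ U R₂, Matrix.mul_assoc R₁ V R₂,
      dSOsq_conj R₁ (U * R₂) (V * R₂) hR₁, dSOsq_right R₂ U V hR₂]
  have hSd : S = Matrix.diagonal S.diag := (hS.1.diagonal_diag).symm
  have hDd : D = Matrix.diagonal D.diag := (hD.1.diagonal_diag).symm
  have hΛd : Λ = Matrix.diagonal Λ.diag := (hΛ.1.diagonal_diag).symm
  have hSD : S * permDiag π D = Matrix.diagonal (fun i => S.diag i * D.diag (π.symm i)) := by
    conv_lhs => rw [hSd, hDd, permDiag_diagonal, Matrix.diagonal_mul_diagonal]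
  have hSΛ : S * permDiag π Λ = Matrix.diagonal (fun i => S.diag i * Λ.diag (π.symm i)) := by
    conv_lhs => rw [hSd, hΛd, permDiag_diagonal, Matrix.diagonal_mul_diagonal]
  have h2 : dDsq (S * permDiag π D) (S * permDiag π Λ) = dDsq D Λ := by
    rw [hSD, hSΛ]
    unfold dDsq
    simp only [Matrix.diagonal_apply_eq, Matrix.diag_apply]
    have key : ∀ i, (Real.log (S i i * Λ (π.symm i) (π.symm i))
        - Real.log (S i i * D (π.symm i) (π.symm i))) ^ 2
        = (fun j => (Real.log (Λ j j) - Real.log (D j j)) ^ 2) (π.symm i) := by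
      intro i
      rw [Real.log_mul (ne_of_gt (hS.2 i)) (ne_of_gt (hΛ.2 _)),
        Real.log_mul (ne_of_gt (hS.2 i)) (ne_of_gt (hD.2 _))]
      ring
    calc (∑ i, (Real.log (S i i * Λ (π.symm i) (π.symm i))
            - Real.log (S i i * D (π.symm i) (π.symm i))) ^ 2)
        = ∑ i, (fun j => (Real.log (Λ j j) - Real.log (D j j)) ^ 2) (π.symm i) :=
          Finset.sum_congr rfl (fun i _ => key i)
      _ = ∑ i, (Real.log (Λ i i) - Real.log (D i i)) ^ 2 :=
          Equiv.sum_comp π.symm (fun j => (Real.log (Λ j j) - Real.log (D j j)) ^ 2)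
  unfold gdist
  rw [h1, h2]
end

section
/- Let p ≥ 2 and fix k > 0. For all X, Y ∈ Sym⁺(p), the scaling–rotation distance satisfies d_SR(X,Y) = d_SR(X⁻¹, Y⁻¹). -/
open Matrix

section Aux

lemma diag_inv_diag {p : ℕ} {D : Mat p} (hD : IsDiagPos D) :
    D⁻¹ = Matrix.diagonal (fun i => (D i i)⁻¹) := by
  apply Matrix.inv_eq_right_inv
  conv_lhs => rw [← hD.1.diagonal_diag]
  rw [Matrix.diagonal_mul_diagonal]
  convert Matrix.diagonal_one with i
  simpa [Matrix.diag] using mul_inv_cancel₀ (hD.2 i).ne'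

lemma isDiagPos_inv {p : ℕ} {D : Mat p} (hD : IsDiagPos D) : IsDiagPos D⁻¹ := by
  rw [diag_inv_diag hD]
  exact ⟨Matrix.isDiag_diagonal _, fun i => by simpa using inv_pos.2 (hD.2 i)⟩

lemma version_inv {p : ℕ} {X : Mat p} {a : Mat p × Mat p} (ha : a ∈ Versions X) :
    (a.1, a.2⁻¹) ∈ Versions X⁻¹ := by
  obtain ⟨hU, hD, hX⟩ := ha
  refine ⟨hU, isDiagPos_inv hD, ?_⟩
  have hDdet : IsUnit a.2.det := by
    rw [← hD.1.diagonal_diag, Matrix.det_diagonal]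
    exact (Finset.prod_pos (fun i _ => hD.2 i)).ne'.isUnit
  have hUdet : IsUnit a.1.det := by rw [hU.2]; exact isUnit_one
  have hUT : a.1ᵀ = a.1⁻¹ := by
    rw [Matrix.inv_eq_right_inv hU.1]
  rw [← hX, Matrix.mul_inv_rev, Matrix.mul_inv_rev, hUT,
    Matrix.nonsing_inv_nonsing_inv _ hUdet]
  exact mul_assoc a.1 a.2⁻¹ a.1⁻¹

lemma gdist_inv {p : ℕ} (k : ℝ) {a b : Mat p × Mat p}
    (hDa : IsDiagPos a.2) (hDb : IsDiagPos b.2) :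
    gdist k (a.1, a.2⁻¹) (b.1, b.2⁻¹) = gdist k a b := by
  unfold gdist dDsq
  congr 2
  apply Finset.sum_congr rfl
  intro i _
  rw [diag_inv_diag hDa, diag_inv_diag hDb]
  simp only [Matrix.diagonal_apply_eq]
  rw [Real.log_inv, Real.log_inv]
  ring

lemma dSR_set_subset {p : ℕ} (k : ℝ) (X Y : Mat p) :
    {x | ∃ a ∈ Versions X, ∃ b ∈ Versions Y, x = gdist k a b} ⊆
    {x | ∃ a ∈ Versions X⁻¹, ∃ b ∈ Versions Y⁻¹, x = gdist k a b} := by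
  rintro x ⟨a, ha, b, hb, rfl⟩
  exact ⟨(a.1, a.2⁻¹), version_inv ha, (b.1, b.2⁻¹), version_inv hb,
    (gdist_inv k ha.2.1 hb.2.1).symm⟩

end Aux

/-- the scaling–rotation distance is invariant under matrix inversion. -/
theorem dSR_inv_invariant {p : ℕ} (hp : 2 ≤ p) (k : ℝ) (hk : 0 < k)
    (X Y : Mat p) (hX : X.PosDef) (hY : Y.PosDef) :
    dSR k X Y = dSR k X⁻¹ Y⁻¹ := by
  unfold dSR
  congr 1
  apply le_antisymm
  · exact dSR_set_subset k X Y
  · intro x hx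
    have := dSR_set_subset k X⁻¹ Y⁻¹ hx
    rwa [Matrix.nonsing_inv_nonsing_inv X hX.det_pos.ne'.isUnit,
      Matrix.nonsing_inv_nonsing_inv Y hY.det_pos.ne'.isUnit] at this
end

section
/- Let p ≥ 2 and fix k > 0. Let X, Y ∈ Sym⁺(p) and suppose ((U,D),(V,Λ)) ∈ 𝓔_X × 𝓔_Y attains the infimum defining d_SR(X,Y), i.e. d((U,D),(V,Λ)) = d_SR(X,Y). Let A be a p×p real antisymmetric matrix with exp(A) = V Uᵀ of minimal Frobenius norm among all such antisymmetric matrices, and let L := log(D⁻¹Λ) ∈ Diag(p) (entrywise logarithm of the diagonal). Then the scaling–rotation curve χ(t) := exp(At) U D exp(Lt) Uᵀ exp(Aᵀt) satisfies χ(0) = X, χ(1) = Y, and k·‖A‖_F²/2 + ‖L‖_F² = d_SR(X,Y)². -/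
open Matrix

lemma frobSq_nonneg {p : ℕ} (A : Mat p) : 0 ≤ frobSq A :=
  Finset.sum_nonneg fun i _ => Finset.sum_nonneg fun j _ => sq_nonneg _

/-- the scaling–rotation curve built from a minimal pair joins `X` to `Y`
and has squared length `d_SR(X,Y)²`. -/
theorem minimal_pair_gives_minimal_curve {p : ℕ} (hp : 2 ≤ p) (k : ℝ) (hk : 0 < k)
    (X Y : Mat p) (hX : X.PosDef) (hY : Y.PosDef)
    (U D V Λ : Mat p) (hUD : (U, D) ∈ Versions X) (hVL : (V, Λ) ∈ Versions Y)
    (hmin : gdist k (U, D) (V, Λ) = dSR k X Y)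
    (A : Mat p) (hA : IsAntisym A) (hexp : NormedSpace.exp A = V * Uᵀ)
    (hAmin : ∀ A' : Mat p, IsAntisym A' → NormedSpace.exp A' = V * Uᵀ →
      frobSq A ≤ frobSq A')
    (L : Mat p) (hLdef : L = Matrix.diagonal fun i => Real.log ((D i i)⁻¹ * Λ i i)) :
    (NormedSpace.exp ((0 : ℝ) • A) * U * D * NormedSpace.exp ((0 : ℝ) • L) * Uᵀ *
        NormedSpace.exp ((0 : ℝ) • Aᵀ) = X) ∧
    (NormedSpace.exp ((1 : ℝ) • A) * U * D * NormedSpace.exp ((1 : ℝ) • L) * Uᵀ *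
        NormedSpace.exp ((1 : ℝ) • Aᵀ) = Y) ∧
    k * frobSq A / 2 + frobSq L = (dSR k X Y) ^ 2 := by
  obtain ⟨⟨hUorth, _⟩, ⟨hDdiag, hDpos⟩, hXeq⟩ := hUD
  obtain ⟨⟨hVorth, _⟩, ⟨hLdiag, hLpos⟩, hYeq⟩ := hVL
  dsimp only at hUorth hXeq hDdiag hDpos hVorth hYeq hLdiag hLpos
  have hUtU : Uᵀ * U = 1 := mul_eq_one_comm.mp hUorth
  -- exp L computations
  have hexpL : NormedSpace.exp ((1:ℝ) • L) =
      Matrix.diagonal fun i => (D i i)⁻¹ * Λ i i := by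
    rw [one_smul, hLdef, Matrix.exp_diagonal]
    refine congrArg Matrix.diagonal (funext fun i => ?_)
    rw [Pi.coe_exp, ← Real.exp_eq_exp_ℝ, Real.exp_log]
    exact mul_pos (inv_pos.mpr (hDpos i)) (hLpos i)
  refine ⟨?_, ?_, ?_⟩
  · simp only [zero_smul, NormedSpace.exp_zero, Matrix.mul_one, Matrix.one_mul] at *
    exact hXeq
  · have hexpAT : NormedSpace.exp ((1:ℝ) • Aᵀ) = U * Vᵀ := by
      rw [one_smul, Matrix.exp_transpose, hexp, Matrix.transpose_mul,
        Matrix.transpose_transpose]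
    rw [one_smul, hexp, hexpAT, hexpL]
    have hDL : D * Matrix.diagonal (fun i => (D i i)⁻¹ * Λ i i) = Λ := by
      rw [← hDdiag.diagonal_diag, Matrix.diagonal_mul_diagonal, ← hLdiag.diagonal_diag]
      refine congrArg Matrix.diagonal (funext fun i => ?_)
      simp [Matrix.diag, mul_inv_cancel_left₀ (hDpos i).ne']
    calc V * Uᵀ * U * D * Matrix.diagonal (fun i => (D i i)⁻¹ * Λ i i) * Uᵀ * (U * Vᵀ)
        = V * (Uᵀ * U) * (D * Matrix.diagonal (fun i => (D i i)⁻¹ * Λ i i)) *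
            ((Uᵀ * U) * Vᵀ) := by noncomm_ring
      _ = Y := by rw [hUtU, hDL, Matrix.mul_one, Matrix.one_mul, ← hYeq]
  · -- squared-length identity
    have hdSO : dSOsq U V = frobSq A / 2 := by
      refine le_antisymm (csInf_le ⟨frobSq A / 2, ?_⟩ ⟨A, hA, hexp, rfl⟩) ?_
      · rintro x ⟨A', hA', hexp', rfl⟩
        linarith [hAmin A' hA' hexp']
      · exact le_csInf ⟨frobSq A / 2, A, hA, hexp, rfl⟩
          (by rintro x ⟨A', hA', hexp', rfl⟩; linarith [hAmin A' hA' hexp'])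
    have hdD : dDsq D Λ = frobSq L := by
      rw [dDsq, frobSq, hLdef]
      rw [Finset.sum_comm]
      refine Finset.sum_congr rfl fun i _ => ?_
      rw [Finset.sum_eq_single i]
      · simp [Matrix.diagonal_apply_eq, Real.log_mul (inv_ne_zero (hDpos i).ne')
          (hLpos i).ne', Real.log_inv]
        ring
      · intro j _ hj
        simp [Matrix.diagonal_apply_ne _ hj]
      · simp
    have hnn : 0 ≤ k * dSOsq U V + dDsq D Λ := by
      rw [hdSO, hdD]
      have := frobSq_nonneg A
      have := frobSq_nonneg L
      positivity
    rw [← hmin, gdist]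
    simp only
    rw [Real.sq_sqrt hnn, hdSO, hdD]
    ring
end

section
/- Fix k > 0 and let X, Y ∈ Sym⁺(2) each have two distinct eigenvalues. Let (U,D) be any version of X and (V,Λ) any version of Y. Then d_SR(X,Y) = min{ d((U I_σ P_πᵀ, D_π), (V,Λ)) : σ ∈ {(1,1),(−1,−1)}, π a permutation of {1,2} }, the minimum over the four resulting versions of X. -/
open Matrix

noncomputable section
namespace SRaux

def Jm : Mat 2 := !![0,-1;1,0]

lemma hJt : Jmᵀ = !![0,1;-1,0] := by
  ext i j; fin_cases i <;> fin_cases j <;> simp [Jm]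

lemma J_mul_Jt : Jm * Jmᵀ = 1 := by
  rw [hJt, Matrix.one_fin_two]; norm_num [Jm, Matrix.mul_fin_two]

lemma Jt_mul_J : Jmᵀ * Jm = 1 := by
  rw [hJt, Matrix.one_fin_two]; norm_num [Jm, Matrix.mul_fin_two]

lemma det_Jm : Jm.det = 1 := by norm_num [Jm, Matrix.det_fin_two_of]

lemma conjJ (D : Mat 2) : Jm * D * Jmᵀ = !![D 1 1, -(D 1 0); -(D 0 1), D 0 0] := by
  rw [hJt, Matrix.eta_fin_two D]; norm_num [Jm, Matrix.mul_fin_two]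

lemma conjJ_conjJ (D : Mat 2) : Jm * (Jm * D * Jmᵀ) * Jmᵀ = D := by
  rw [conjJ D, conjJ]; simp [← Matrix.eta_fin_two]

lemma conjJt_conjJ (D : Mat 2) : Jmᵀ * (Jm * D * Jmᵀ) * Jm = D := by
  calc Jmᵀ * (Jm * D * Jmᵀ) * Jm = (Jmᵀ * Jm) * D * (Jmᵀ * Jm) := by
        simp only [Matrix.mul_assoc]
    _ = D := by rw [Jt_mul_J]; simp

-- versions transformation lemmas
lemma neg_mem {X U D : Mat 2} (h : (U, D) ∈ Versions X) : (-U, D) ∈ Versions X := by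
  simp only [Versions, Set.mem_setOf_eq, IsSO] at h ⊢
  obtain ⟨⟨h1, h2⟩, h3, h4⟩ := h
  refine ⟨⟨by simpa using h1, by simp [Matrix.det_neg, h2]⟩, h3, by simpa using h4⟩

lemma mulJ_mem {X U D : Mat 2} (h : (U, D) ∈ Versions X) :
    (U * Jm, Jm * D * Jmᵀ) ∈ Versions X := by
  simp only [Versions, Set.mem_setOf_eq, IsSO, IsDiagPos] at h ⊢
  obtain ⟨⟨h1, h2⟩, ⟨h3, h3'⟩, h4⟩ := h
  refine ⟨⟨?_, by simp [Matrix.det_mul, h2, det_Jm]⟩, ⟨?_, ?_⟩, ?_⟩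
  · calc U * Jm * (U * Jm)ᵀ = U * (Jm * Jmᵀ) * Uᵀ := by
          simp only [Matrix.transpose_mul, Matrix.mul_assoc]
      _ = 1 := by rw [J_mul_Jt]; simpa using h1
  · rw [conjJ]
    intro i j hij
    fin_cases i <;> fin_cases j <;> simp_all <;> exact h3 (by decide)
  · rw [conjJ]
    intro i
    fin_cases i <;> simpa using by first | exact h3' 1 | exact h3' 0
  · calc U * Jm * (Jm * D * Jmᵀ) * (U * Jm)ᵀ
        = U * (Jm * (Jm * D * Jmᵀ) * Jmᵀ) * Uᵀ := by
          simp only [Matrix.transpose_mul, Matrix.mul_assoc]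
      _ = X := by rw [conjJ_conjJ]; exact h4

lemma mulJt_mem {X U D : Mat 2} (h : (U, D) ∈ Versions X) :
    (U * Jmᵀ, Jm * D * Jmᵀ) ∈ Versions X := by
  simp only [Versions, Set.mem_setOf_eq, IsSO, IsDiagPos] at h ⊢
  obtain ⟨⟨h1, h2⟩, ⟨h3, h3'⟩, h4⟩ := h
  refine ⟨⟨?_, ?_⟩, ⟨?_, ?_⟩, ?_⟩
  · calc U * Jmᵀ * (U * Jmᵀ)ᵀ = U * (Jmᵀ * Jm) * Uᵀ := by
          simp only [Matrix.transpose_mul, Matrix.transpose_transpose, Matrix.mul_assoc]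
      _ = 1 := by rw [Jt_mul_J]; simpa using h1
  · simp [Matrix.det_mul, h2, Matrix.det_transpose, det_Jm]
  · rw [conjJ]
    intro i j hij
    fin_cases i <;> fin_cases j <;> simp_all <;> exact h3 (by decide)
  · rw [conjJ]
    intro i
    fin_cases i <;> simpa using by first | exact h3' 1 | exact h3' 0
  · calc U * Jmᵀ * (Jm * D * Jmᵀ) * (U * Jmᵀ)ᵀ
        = U * (Jmᵀ * (Jm * D * Jmᵀ) * Jm) * Uᵀ := by
          simp only [Matrix.transpose_mul, Matrix.transpose_transpose, Matrix.mul_assoc]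
      _ = X := by rw [conjJt_conjJ]; exact h4


lemma dSOsq_right (A B W : Mat 2) (hW : W * Wᵀ = 1) :
    dSOsq (A * W) (B * W) = dSOsq A B := by
  have key : (B * W) * (A * W)ᵀ = B * Aᵀ := by
    calc (B * W) * (A * W)ᵀ = B * (W * Wᵀ) * Aᵀ := by
          simp only [Matrix.transpose_mul, Matrix.mul_assoc]
      _ = B * Aᵀ := by rw [hW]; simp
  unfold dSOsq
  rw [key]

lemma dDsq_swapped (D L : Mat 2) : dDsq D (Jm * L * Jmᵀ) = dDsq (Jm * D * Jmᵀ) L := by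
  unfold dDsq
  rw [conjJ, conjJ]
  simp [Fin.sum_univ_two]
  ring

lemma diag_distinct {X U D : Mat 2} (hX : X.PosDef)
    (hdX : Function.Injective hX.1.eigenvalues) (h : (U, D) ∈ Versions X) :
    D 0 0 ≠ D 1 1 := by
  intro heq
  simp only [Versions, Set.mem_setOf_eq, IsSO, IsDiagPos] at h
  obtain ⟨⟨hU1, _⟩, ⟨hDd, _⟩, hXE⟩ := h
  have hD : D = (D 0 0) • (1 : Mat 2) := by
    ext i j
    fin_cases i <;> fin_cases j <;>
      simp [Matrix.one_apply, hDd (show (0:Fin 2) ≠ 1 by decide),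
        hDd (show (1:Fin 2) ≠ 0 by decide), heq.symm]
  have hXd : X = (D 0 0) • (1 : Mat 2) := by
    calc X = U * D * Uᵀ := hXE.symm
      _ = U * ((D 0 0) • (1 : Mat 2)) * Uᵀ := by rw [← hD]
      _ = (D 0 0) • (1 : Mat 2) := by
          rw [Matrix.mul_smul, Matrix.smul_mul, Matrix.mul_one, hU1]
  have hspec : spectrum ℝ X = {D 0 0} := by
    rw [hXd, ← Algebra.algebraMap_eq_smul_one]
    exact spectrum.scalar_eq _
  have h0 := hX.1.eigenvalues_mem_spectrum_real 0
  have h1 := hX.1.eigenvalues_mem_spectrum_real 1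
  rw [hspec, Set.mem_singleton_iff] at h0 h1
  exact absurd (hdX (h0.trans h1.symm)) (by decide)


lemma classify {X U D : Mat 2} (hUD : (U, D) ∈ Versions X) (hne : D 0 0 ≠ D 1 1)
    {a : Mat 2 × Mat 2} (h : a ∈ Versions X) :
    a = (U, D) ∨ a = (-U, D) ∨ a = (U * Jm, Jm * D * Jmᵀ) ∨ a = (U * Jmᵀ, Jm * D * Jmᵀ) := by
  simp only [Versions, Set.mem_setOf_eq, IsSO, IsDiagPos] at hUD h
  obtain ⟨⟨hU1, hUdet⟩, ⟨hDd, hDp⟩, hUX⟩ := hUD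
  obtain ⟨⟨hV1, hVdet⟩, ⟨hEd, hEp⟩, hVX⟩ := h
  have hUtU : Uᵀ * U = 1 := mul_eq_one_comm.mp hU1
  set R := Uᵀ * a.1 with hR
  have hU' : a.1 = U * R := by rw [hR, ← Matrix.mul_assoc, hU1, Matrix.one_mul]
  have hRRt : R * Rᵀ = 1 := by
    have e : Uᵀ * a.1 * (Uᵀ * a.1)ᵀ = Uᵀ * (a.1 * a.1ᵀ) * U := by
      simp only [Matrix.transpose_mul, Matrix.transpose_transpose, Matrix.mul_assoc]
    rw [hR, e, hV1, Matrix.mul_one, hUtU]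
  have hdetR : R.det = 1 := by
    rw [hR, Matrix.det_mul, Matrix.det_transpose, hUdet, hVdet, mul_one]
  have hRD : R * a.2 * Rᵀ = D := by
    have e0 : a.1 * a.2 * a.1ᵀ = U * D * Uᵀ := by rw [hVX, hUX]
    have e : Uᵀ * a.1 * a.2 * (Uᵀ * a.1)ᵀ = Uᵀ * (a.1 * a.2 * a.1ᵀ) * U := by
      simp only [Matrix.transpose_mul, Matrix.transpose_transpose, Matrix.mul_assoc]
    rw [hR, e, e0]
    have e2 : Uᵀ * (U * D * Uᵀ) * U = (Uᵀ * U) * D * (Uᵀ * U) := by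
      simp only [Matrix.mul_assoc]
    rw [e2, hUtU, Matrix.one_mul, Matrix.mul_one]
  -- entry equations
  have z1 : a.2 0 1 = 0 := hEd (by decide)
  have z2 : a.2 1 0 = 0 := hEd (by decide)
  have zD1 : D 0 1 = 0 := hDd (by decide)
  have h1 := Matrix.ext_iff.mpr hRRt 0 0
  have h2 := Matrix.ext_iff.mpr hRRt 0 1
  simp [Matrix.mul_apply, Fin.sum_univ_two, Matrix.one_apply] at h1 h2
  have hdet2 : R 0 0 * R 1 1 - R 0 1 * R 1 0 = 1 := by
    rw [Matrix.det_fin_two] at hdetR; linear_combination hdetR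
  have hd : R 1 1 = R 0 0 := by
    linear_combination R 0 0 * hdet2 + R 0 1 * h2 - R 1 1 * h1
  have hc : R 1 0 = -(R 0 1) := by
    linear_combination (-(R 0 1)) * hdet2 + R 0 0 * h2 - R 1 0 * h1
  have g00 := Matrix.ext_iff.mpr hRD 0 0
  have g01 := Matrix.ext_iff.mpr hRD 0 1
  have g11 := Matrix.ext_iff.mpr hRD 1 1
  simp [Matrix.mul_apply, Fin.sum_univ_two, z1, z2, hd, hc, zD1] at g00 g01 g11
  -- now g00 : relates a², b², x, y
  have hxy : a.2 0 0 ≠ a.2 1 1 := by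
    intro hxyeq
    exact hne (by linear_combination g11 - g00 +
      (R 0 0 * R 0 0 - R 0 1 * R 0 1) * hxyeq)
  have hab0 : (R 0 0 * R 0 1) * (a.2 1 1 - a.2 0 0) = 0 := by linear_combination g01
  have hab : R 0 0 * R 0 1 = 0 := by
    rcases mul_eq_zero.mp hab0 with h | h
    · exact h
    · exact absurd (by linarith [sub_eq_zero.mp h] : a.2 0 0 = a.2 1 1) hxy
  rcases mul_eq_zero.mp hab with ha | hb
  · -- R 0 0 = 0 : swap cases
    have hb2 : R 0 1 * R 0 1 = 1 := by linear_combination h1 - R 0 0 * ha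
    have hx : a.2 0 0 = D 1 1 := by
      linear_combination g11 - a.2 0 0 * hb2 - (R 0 0 * a.2 1 1) * ha
    have hy : a.2 1 1 = D 0 0 := by
      linear_combination g00 - a.2 1 1 * hb2 - (R 0 0 * a.2 0 0) * ha
    have hD' : a.2 = Jm * D * Jmᵀ := by
      rw [conjJ]
      ext i j
      fin_cases i <;> fin_cases j <;>
        simp [hx, hy, z1, z2, hDd (show (0:Fin 2) ≠ 1 by decide),
          hDd (show (1:Fin 2) ≠ 0 by decide)]
    have hb1 : (R 0 1 - 1) * (R 0 1 + 1) = 0 := by linear_combination hb2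
    rcases mul_eq_zero.mp hb1 with hb | hb
    · -- R 0 1 = 1, R = Jmᵀ
      have hbv : R 0 1 = 1 := by linarith [sub_eq_zero.mp hb]
      have hRJ : R = Jmᵀ := by
        rw [hJt]; ext i j
        fin_cases i <;> fin_cases j <;> simp [ha, hbv, hc, hd]
      exact Or.inr (Or.inr (Or.inr (Prod.ext_iff.mpr
        ⟨by rw [hU', hRJ], hD'⟩)))
    · -- R 0 1 = -1, R = Jm
      have hbv : R 0 1 = -1 := by linarith [eq_neg_of_add_eq_zero_left hb]
      have hRJ : R = Jm := by
        show R = !![0,-1;1,0]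
        ext i j
        fin_cases i <;> fin_cases j <;> simp [ha, hbv, hc, hd]
      exact Or.inr (Or.inr (Or.inl (Prod.ext_iff.mpr
        ⟨by rw [hU', hRJ], hD'⟩)))
  · -- R 0 1 = 0 : identity cases
    have ha2 : R 0 0 * R 0 0 = 1 := by linear_combination h1 - R 0 1 * hb
    have hx : a.2 0 0 = D 0 0 := by
      linear_combination g00 - a.2 0 0 * ha2 - (R 0 1 * a.2 1 1) * hb
    have hy : a.2 1 1 = D 1 1 := by
      linear_combination g11 - a.2 1 1 * ha2 - (R 0 1 * a.2 0 0) * hb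
    have hD' : a.2 = D := by
      ext i j
      fin_cases i <;> fin_cases j <;>
        simp [hx, hy, z1, z2, hDd (show (0:Fin 2) ≠ 1 by decide),
          hDd (show (1:Fin 2) ≠ 0 by decide)]
    have ha1 : (R 0 0 - 1) * (R 0 0 + 1) = 0 := by linear_combination ha2
    rcases mul_eq_zero.mp ha1 with ha | ha
    · have hav : R 0 0 = 1 := by linarith [sub_eq_zero.mp ha]
      have hRJ : R = 1 := by
        rw [Matrix.one_fin_two]; ext i j
        fin_cases i <;> fin_cases j <;> simp [hav, hb, hc, hd]
      exact Or.inl (Prod.ext_iff.mpr ⟨by rw [hU', hRJ, Matrix.mul_one], hD'⟩)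
    · have hav : R 0 0 = -1 := by linarith [eq_neg_of_add_eq_zero_left ha]
      have hRJ : R = -1 := by
        have : (-1 : Mat 2) = !![-1,0;0,-1] := by
          rw [Matrix.one_fin_two]; norm_num
        rw [this]; ext i j
        fin_cases i <;> fin_cases j <;> simp [hav, hb, hc, hd]
      exact Or.inr (Or.inl (Prod.ext_iff.mpr
        ⟨by rw [hU', hRJ, Matrix.mul_neg, Matrix.mul_one], hD'⟩))


lemma reduce {k : ℝ} {X Y V L : Mat 2} (hVL : (V, L) ∈ Versions Y) (hneL : L 0 0 ≠ L 1 1)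
    {a b : Mat 2 × Mat 2} (ha : a ∈ Versions X) (hb : b ∈ Versions Y) :
    ∃ a' ∈ Versions X, gdist k a b = gdist k a' (V, L) := by
  rcases classify hVL hneL hb with h | h | h | h
  · exact ⟨a, ha, by rw [h]⟩
  · refine ⟨(-a.1, a.2), neg_mem ha, ?_⟩
    have e : dSOsq ((-a.1) * (-1)) (V * (-1)) = dSOsq (-a.1) V :=
      dSOsq_right (-a.1) V (-1) (by simp)
    simp only [Matrix.mul_neg, Matrix.mul_one, neg_neg] at e
    rw [h]; unfold gdist; simp only
    rw [e]
  · refine ⟨(a.1 * Jmᵀ, Jm * a.2 * Jmᵀ), mulJt_mem ha, ?_⟩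
    have e : dSOsq ((a.1 * Jmᵀ) * Jm) (V * Jm) = dSOsq (a.1 * Jmᵀ) V :=
      dSOsq_right (a.1 * Jmᵀ) V Jm J_mul_Jt
    rw [Matrix.mul_assoc, Jt_mul_J, Matrix.mul_one] at e
    rw [h]; unfold gdist; simp only
    rw [e, dDsq_swapped]
  · refine ⟨(a.1 * Jm, Jm * a.2 * Jmᵀ), mulJ_mem ha, ?_⟩
    have e : dSOsq ((a.1 * Jm) * Jmᵀ) (V * Jmᵀ) = dSOsq (a.1 * Jm) V :=
      dSOsq_right (a.1 * Jm) V Jmᵀ (by rw [Matrix.transpose_transpose]; exact Jt_mul_J)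
    rw [Matrix.mul_assoc, J_mul_Jt, Matrix.mul_one] at e
    rw [h]; unfold gdist; simp only
    rw [e, dDsq_swapped]

lemma P0_refl : P0 (Equiv.refl (Fin 2)) = 1 := by
  ext i j; simp [P0, Matrix.one_apply]; congr

lemma Pmat_refl : Pmat (Equiv.refl (Fin 2)) = 1 := by
  rw [Pmat, P0_refl]; simp

lemma P0_swap : P0 (Equiv.swap (0 : Fin 2) 1) = !![0,1;1,0] := by
  ext i j; fin_cases i <;> fin_cases j <;> simp [P0, Equiv.swap_apply_def]

lemma Pmat_swap : Pmat (Equiv.swap (0 : Fin 2) 1) = Jm := by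
  rw [Pmat, P0_swap, if_neg]
  · have hf : flipMat 2 = !![-1,0;0,1] := by
      ext i j; fin_cases i <;> fin_cases j <;> simp [flipMat]
    rw [hf, Jm]; norm_num [Matrix.mul_fin_two]
  · norm_num [Matrix.det_fin_two_of]


end SRaux


open SRaux

/-- for `2 × 2` SPD matrices with distinct eigenvalues, the
scaling–rotation distance is the minimum over the four versions of `X`. -/
theorem dSR_two_by_two_distinct {k : ℝ} (hk : 0 < k)
    (X Y : Mat 2) (hX : X.PosDef) (hY : Y.PosDef)
    (hdX : Function.Injective hX.1.eigenvalues)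
    (hdY : Function.Injective hY.1.eigenvalues)
    (U D V Λ : Mat 2) (hUD : (U, D) ∈ Versions X) (hVL : (V, Λ) ∈ Versions Y) :
    dSR k X Y =
      min
        (min
          (gdist k (U * Matrix.diagonal (fun _ => (1 : ℝ)) * (Pmat (Equiv.refl (Fin 2)))ᵀ,
              permDiag (Equiv.refl (Fin 2)) D) (V, Λ))
          (gdist k (U * Matrix.diagonal (fun _ => (1 : ℝ)) * (Pmat (Equiv.swap (0 : Fin 2) 1))ᵀ,
              permDiag (Equiv.swap (0 : Fin 2) 1) D) (V, Λ)))
        (min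
          (gdist k (U * Matrix.diagonal (fun _ => (-1 : ℝ)) * (Pmat (Equiv.refl (Fin 2)))ᵀ,
              permDiag (Equiv.refl (Fin 2)) D) (V, Λ))
          (gdist k (U * Matrix.diagonal (fun _ => (-1 : ℝ)) * (Pmat (Equiv.swap (0 : Fin 2) 1))ᵀ,
              permDiag (Equiv.swap (0 : Fin 2) 1) D) (V, Λ))) := by
  have hdiag1 : (Matrix.diagonal (fun _ : Fin 2 => (1 : ℝ))) = 1 := by
    ext i j; by_cases h : i = j <;> simp [Matrix.diagonal_apply, h, Matrix.one_apply]
  have hdiagm1 : (Matrix.diagonal (fun _ : Fin 2 => (-1 : ℝ))) = -1 := by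
    ext i j; by_cases h : i = j <;> simp [Matrix.diagonal_apply, h, Matrix.one_apply]
  have hnegJt : -(Jmᵀ) = Jm := by
    rw [hJt]; ext i j; fin_cases i <;> fin_cases j <;> simp [Jm]
  have hperm_refl : permDiag (Equiv.refl (Fin 2)) D = D := by
    unfold permDiag; rw [Pmat_refl]; simp
  have hperm_swap : permDiag (Equiv.swap (0 : Fin 2) 1) D = Jm * D * Jmᵀ := by
    unfold permDiag; rw [Pmat_swap]
  have e1 : U * Matrix.diagonal (fun _ : Fin 2 => (1 : ℝ)) * (Pmat (Equiv.refl (Fin 2)))ᵀ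
      = U := by rw [hdiag1, Pmat_refl]; simp
  have e2 : U * Matrix.diagonal (fun _ : Fin 2 => (1 : ℝ)) * (Pmat (Equiv.swap (0 : Fin 2) 1))ᵀ
      = U * Jmᵀ := by rw [hdiag1, Pmat_swap]; simp
  have e3 : U * Matrix.diagonal (fun _ : Fin 2 => (-1 : ℝ)) * (Pmat (Equiv.refl (Fin 2)))ᵀ
      = -U := by rw [hdiagm1, Pmat_refl]; simp
  have e4 : U * Matrix.diagonal (fun _ : Fin 2 => (-1 : ℝ)) * (Pmat (Equiv.swap (0 : Fin 2) 1))ᵀ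
      = U * Jm := by
    rw [hdiagm1, Pmat_swap, Matrix.mul_neg, Matrix.mul_one, Matrix.neg_mul,
      ← Matrix.mul_neg, hnegJt]
  rw [e1, e2, e3, e4, hperm_refl, hperm_swap]
  set v1 := gdist k (U, D) (V, Λ) with hv1
  set v2 := gdist k (U * Jmᵀ, Jm * D * Jmᵀ) (V, Λ) with hv2
  set v3 := gdist k (-U, D) (V, Λ) with hv3
  set v4 := gdist k (U * Jm, Jm * D * Jmᵀ) (V, Λ) with hv4
  have hneD := diag_distinct hX hdX hUD
  have hneL := diag_distinct hY hdY hVL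
  have hset : {x | ∃ a ∈ Versions X, ∃ b ∈ Versions Y, x = gdist k a b}
      = ({v1, v2, v3, v4} : Set ℝ) := by
    ext x
    simp only [Set.mem_setOf_eq, Set.mem_insert_iff, Set.mem_singleton_iff]
    constructor
    · rintro ⟨a, ha, b, hb, rfl⟩
      obtain ⟨a', ha', heq⟩ := reduce hVL hneL ha hb
      rw [heq]
      rcases classify hUD hneD ha' with h | h | h | h
      · left; rw [h]
      · right; right; left; rw [h]
      · right; right; right; rw [h]
      · right; left; rw [h]
    · rintro (rfl | rfl | rfl | rfl)
      · exact ⟨(U, D), hUD, (V, Λ), hVL, rfl⟩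
      · exact ⟨(U * Jmᵀ, Jm * D * Jmᵀ), mulJt_mem hUD, (V, Λ), hVL, rfl⟩
      · exact ⟨(-U, D), neg_mem hUD, (V, Λ), hVL, rfl⟩
      · exact ⟨(U * Jm, Jm * D * Jmᵀ), mulJ_mem hUD, (V, Λ), hVL, rfl⟩
  unfold dSR
  rw [hset]
  have hs4 : sInf ({v1, v2, v3, v4} : Set ℝ) = min v1 (min v2 (min v3 v4)) := by
    have b3 : BddBelow ({v3, v4} : Set ℝ) :=
      ((Set.finite_singleton v4).insert v3).bddBelow
    have b2 : BddBelow ({v2, v3, v4} : Set ℝ) :=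
      (((Set.finite_singleton v4).insert v3).insert v2).bddBelow
    have b1 : BddBelow ({v4} : Set ℝ) := (Set.finite_singleton _).bddBelow
    rw [show ({v1, v2, v3, v4} : Set ℝ) = insert v1 {v2, v3, v4} from rfl,
      csInf_insert b2 (by simp),
      show ({v2, v3, v4} : Set ℝ) = insert v2 {v3, v4} from rfl,
      csInf_insert b3 (by simp),
      show ({v3, v4} : Set ℝ) = insert v3 {v4} from rfl,
      csInf_insert b1 (by simp), csInf_singleton]
    try simp [inf_eq_min]
  rw [hs4]
  exact (min_assoc v1 v2 (min v3 v4)).symm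
end
end

section
/- Fix k > 0 and let X = d₁·I₂ ∈ Sym⁺(2) for some d₁ > 0 (both eigenvalues of X equal). Then for any version (V,Λ) of Y ∈ Sym⁺(2), one has d_SR(X,Y) = d((V, d₁·I₂), (V,Λ)) = d_𝒟(d₁·I₂, Λ), regardless of whether the eigenvalues of Y are distinct or not. -/
open Matrix

lemma dSOsq_nonneg {p : ℕ} (U V : Mat p) : 0 ≤ dSOsq U V := by
  apply Real.sInf_nonneg
  rintro x ⟨A, -, -, rfl⟩
  have : 0 ≤ frobSq A := Finset.sum_nonneg fun i _ =>
    Finset.sum_nonneg fun j _ => sq_nonneg _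
  linarith

lemma dSOsq_self {p : ℕ} (V : Mat p) (hV : IsSO V) : dSOsq V V = 0 := by
  have h0 : (0 : ℝ) ∈ {x | ∃ A : Mat p, IsAntisym A ∧ NormedSpace.exp A = V * Vᵀ ∧
      x = frobSq A / 2} := by
    refine ⟨0, ?_, ?_, ?_⟩
    · simp [IsAntisym]
    · rw [hV.1, NormedSpace.exp_zero]
    · simp [frobSq]
  have hlb : ∀ x ∈ {x | ∃ A : Mat p, IsAntisym A ∧ NormedSpace.exp A = V * Vᵀ ∧
      x = frobSq A / 2}, (0:ℝ) ≤ x := by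
    rintro x ⟨A, -, -, rfl⟩
    have : 0 ≤ frobSq A := Finset.sum_nonneg fun i _ =>
      Finset.sum_nonneg fun j _ => sq_nonneg _
    linarith
  exact le_antisymm (csInf_le ⟨0, hlb⟩ h0) (le_csInf ⟨0, h0⟩ hlb)

lemma version_eigs (Y : Mat 2) {V Λ : Mat 2} (hVL : (V, Λ) ∈ Versions Y) :
    Λ.trace = Y.trace ∧ Λ.det = Y.det := by
  obtain ⟨hV, hΛ, hEq⟩ := hVL
  have hVV : Vᵀ * V = 1 := mul_eq_one_comm.mp hV.1
  constructor
  · rw [← hEq, Matrix.trace_mul_comm, ← Matrix.mul_assoc, hVV, Matrix.one_mul]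
  · rw [← hEq]
    simp [Matrix.det_mul, Matrix.det_transpose, hV.2]

lemma dDsq_version (Y : Mat 2) {V Λ W Λ' : Mat 2} (hVL : (V, Λ) ∈ Versions Y)
    (hWL : (W, Λ') ∈ Versions Y) (D : Mat 2) (hD : D 0 0 = D 1 1) :
    dDsq D Λ = dDsq D Λ' := by
  have h1 := version_eigs Y hVL
  have h2 := version_eigs Y hWL
  have hΛd := hVL.2.1.1
  have hΛ'd := hWL.2.1.1
  have e01 : Λ 0 1 = 0 := hΛd (by decide)
  have e10 : Λ 1 0 = 0 := hΛd (by decide)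
  have f01 : Λ' 0 1 = 0 := hΛ'd (by decide)
  have f10 : Λ' 1 0 = 0 := hΛ'd (by decide)
  have htr : Λ 0 0 + Λ 1 1 = Λ' 0 0 + Λ' 1 1 := by
    have := h1.1.trans h2.1.symm
    rwa [Matrix.trace_fin_two, Matrix.trace_fin_two] at this
  have hdet : Λ 0 0 * Λ 1 1 = Λ' 0 0 * Λ' 1 1 := by
    have := h1.2.trans h2.2.symm
    rw [Matrix.det_fin_two, Matrix.det_fin_two, e01, f01] at this
    simpa using this
  have key : (Λ' 0 0 - Λ 0 0) * (Λ' 0 0 - Λ 1 1) = 0 := by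
    linear_combination (-(Λ' 0 0)) * htr + hdet
  rcases mul_eq_zero.mp key with h | h
  · have ha : Λ' 0 0 = Λ 0 0 := by linarith
    have hb : Λ' 1 1 = Λ 1 1 := by linarith
    simp [dDsq, Fin.sum_univ_two, ha, hb]
  · have ha : Λ' 0 0 = Λ 1 1 := by linarith
    have hb : Λ' 1 1 = Λ 0 0 := by linarith
    rw [dDsq, dDsq, Fin.sum_univ_two, Fin.sum_univ_two, ha, hb, hD]
    ring

/-- scaling–rotation distance from an isotropic `2 × 2` SPD matrix. -/
theorem dSR_two_by_two_isotropic {k : ℝ} (hk : 0 < k)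
    (d₁ : ℝ) (hd₁ : 0 < d₁) (Y : Mat 2) (hY : Y.PosDef)
    (V Λ : Mat 2) (hVL : (V, Λ) ∈ Versions Y) :
    dSR k (d₁ • (1 : Mat 2)) Y = gdist k (V, d₁ • (1 : Mat 2)) (V, Λ) ∧
    gdist k (V, d₁ • (1 : Mat 2)) (V, Λ) = Real.sqrt (dDsq (d₁ • (1 : Mat 2)) Λ) := by
  set D₀ : Mat 2 := d₁ • (1 : Mat 2) with hD₀
  have hD₀diag : ∀ i, D₀ i i = d₁ := by intro i; simp [hD₀]
  have hV : IsSO V := hVL.1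
  have hg : gdist k (V, D₀) (V, Λ) = Real.sqrt (dDsq D₀ Λ) := by
    rw [gdist]
    simp [dSOsq_self V hV]
  refine ⟨?_, hg⟩
  -- the infimum set
  set S := {x | ∃ a ∈ Versions D₀, ∃ b ∈ Versions Y, x = gdist k a b} with hS
  have hmem : Real.sqrt (dDsq D₀ Λ) ∈ S := by
    refine ⟨(V, D₀), ⟨hV, ?_, ?_⟩, ⟨(V, Λ), hVL, hg.symm⟩⟩
    · exact ⟨Matrix.IsDiag.smul d₁ Matrix.isDiag_one, fun i => by simp [hD₀, hd₁]⟩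
    · have hVV : V * Vᵀ = 1 := hV.1
      show V * D₀ * Vᵀ = D₀
      rw [hD₀, Matrix.mul_smul, Matrix.smul_mul, Matrix.mul_one, hVV]
  have hlb : ∀ x ∈ S, Real.sqrt (dDsq D₀ Λ) ≤ x := by
    rintro x ⟨⟨U, D⟩, ⟨hU, hDd, hUD⟩, ⟨W, Λ'⟩, hWL, rfl⟩
    simp only at hU hDd hUD
    have hUU : Uᵀ * U = 1 := mul_eq_one_comm.mp hU.1
    have hmid : Uᵀ * D₀ * U = D₀ := by
      rw [hD₀, Matrix.mul_smul, Matrix.smul_mul, Matrix.mul_one, hUU]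
    have hDeq : D = D₀ := by
      calc D = (Uᵀ * U) * D * (Uᵀ * U) := by rw [hUU]; simp
        _ = Uᵀ * (U * D * Uᵀ) * U := by noncomm_ring
        _ = Uᵀ * D₀ * U := by rw [hUD]
        _ = D₀ := hmid
    have hdd : dDsq D Λ' = dDsq D₀ Λ := by
      rw [hDeq, dDsq_version Y hWL hVL D₀ (by rw [hD₀diag, hD₀diag])]
    rw [gdist]
    apply Real.sqrt_le_sqrt
    have : 0 ≤ k * dSOsq U W := mul_nonneg hk.le (dSOsq_nonneg _ _)
    simp only at hdd ⊢
    rw [hdd] at *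
    linarith [this]
  rw [dSR, ← hS, hg]
  exact le_antisymm (csInf_le ⟨_, hlb⟩ hmem) (le_csInf ⟨_, hmem⟩ hlb)
end
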